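/- arXiv:2507.01344 — 2 statements merged into one kernel-verified Lean document; each statement's English description precedes it below -/
import Mathlib

section
/- Let A be a nonnegative symmetric real n×n matrix. Then ρ_per(A) + η_per(A) = n. -/
/-- The permanent of a (possibly rectangular) matrix whose rows and columns are indexed by
finite types: the sum over all bijections `e : ι ≃ κ` of `∏ i, M i (e i)`.
For a square matrix this is the usual permanent `∑_{σ ∈ S_n} ∏_{i} M i (σ i)`. -/
noncomputable def Matrix.per {ι κ R : Type*} [Fintype ι] [Fintype κ] [DecidableEq ι]
    [DecidableEq κ] [CommSemiring R] (M : Matrix ι κ R) : R :=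
  ∑ e : ι ≃ κ, ∏ i, M i (e i)

/-- The permanental rank `ρ_per(A)` of an `n × n` matrix: the largest `k` such that some
`k × k` submatrix (rows chosen by an injection `f`, columns by an injection `g`) has
nonzero permanent. -/
noncomputable def permRank {n : ℕ} {R : Type*} [CommSemiring R]
    (A : Matrix (Fin n) (Fin n) R) : ℕ :=
  sSup {k | ∃ f g : Fin k → Fin n, Function.Injective f ∧ Function.Injective g ∧
    (A.submatrix f g).per ≠ 0}

/-- The permanental polynomial `π(A, x) = per(A - x I)`. -/
noncomputable def permPoly {n : ℕ} {R : Type*} [CommRing R]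
    (A : Matrix (Fin n) (Fin n) R) : Polynomial R :=
  (A.map Polynomial.C - (Polynomial.X : Polynomial R) • (1 : Matrix (Fin n) (Fin n) (Polynomial R))).per

/-- The permanental nullity `η_per(A)`: the multiplicity of `0` as a root of the
permanental polynomial. -/
noncomputable def permNullity {n : ℕ} {R : Type*} [CommRing R]
    (A : Matrix (Fin n) (Fin n) R) : ℕ :=
  (permPoly A).rootMultiplicity 0

open Matrix Finset Polynomial Equiv

section basic
variable {ι κ R : Type*} [Fintype ι] [Fintype κ] [DecidableEq ι] [DecidableEq κ]

lemma per_nonneg (M : Matrix ι κ ℝ) (h : ∀ i j, 0 ≤ M i j) : 0 ≤ M.per := by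
  apply Finset.sum_nonneg
  intro e _
  exact Finset.prod_nonneg fun i _ => h i (e i)

lemma per_empty [IsEmpty ι] (M : Matrix ι ι R) [CommSemiring R] : M.per = 1 := by
  rw [Matrix.per]
  haveI : Subsingleton (ι ≃ ι) := ⟨fun a b => Equiv.ext fun i => isEmptyElim i⟩
  haveI : Unique (ι ≃ ι) := uniqueOfSubsingleton (Equiv.refl ι)
  rw [Finset.univ_unique, Finset.sum_singleton]
  simp

/-- reindexing a matrix by equivs does not change the permanent -/
lemma per_submatrix {ι' κ' : Type*} [Fintype ι'] [Fintype κ'] [DecidableEq ι'] [DecidableEq κ']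
    [CommSemiring R] (M : Matrix ι κ R) (e : ι' ≃ ι) (f : κ' ≃ κ) :
    (M.submatrix e f).per = M.per := by
  rw [Matrix.per, Matrix.per]
  apply Fintype.sum_equiv (Equiv.equivCongr e f)
  intro σ
  rw [← Equiv.prod_comp e (fun i => M i ((Equiv.equivCongr e f σ) i))]
  simp [Equiv.equivCongr]

/-- nonzero permanent of a nonneg matrix gives a positive "matching" -/
lemma exists_pos_of_per_ne_zero (M : Matrix ι κ ℝ) (h : ∀ i j, 0 ≤ M i j) (hne : M.per ≠ 0) :
    ∃ e : ι ≃ κ, ∀ i, 0 < M i (e i) := by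
  rw [Matrix.per] at hne
  have := Finset.exists_ne_zero_of_sum_ne_zero hne
  obtain ⟨e, _, he⟩ := this
  refine ⟨e, fun i => ?_⟩
  rcases lt_or_eq_of_le (h i (e i)) with hlt | heq
  · exact hlt
  · exact absurd (Finset.prod_eq_zero (Finset.mem_univ i) heq.symm) he

lemma per_ne_zero_of_pos (M : Matrix ι κ ℝ) (h : ∀ i j, 0 ≤ M i j) (e : ι ≃ κ)
    (he : ∀ i, 0 < M i (e i)) : M.per ≠ 0 := by
  have hpos : 0 < M.per := by
    rw [Matrix.per]
    apply Finset.sum_pos' (fun σ _ => Finset.prod_nonneg fun i _ => h i (σ i))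
    exact ⟨e, Finset.mem_univ e, Finset.prod_pos fun i _ => he i⟩
  exact ne_of_gt hpos

end basic

noncomputable def pper {n : ℕ} (A : Matrix (Fin n) (Fin n) ℝ) (S : Finset (Fin n)) : ℝ :=
  (A.submatrix (fun i : {x : Fin n // x ∈ S} => (i : Fin n)) (fun i : {x : Fin n // x ∈ S} => (i : Fin n))).per

lemma sum_fixing {α : Type*} [Fintype α] [DecidableEq α] {R : Type*} [AddCommMonoid R]
    (S : Finset α) (G : Equiv.Perm α → R) :
    ∑ e : Equiv.Perm α, (if ∀ i ∈ S, e i = i then G e else 0)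
      = ∑ τ : Equiv.Perm {x // x ∈ Sᶜ}, G (Equiv.Perm.ofSubtype τ) := by
  classical
  have key : ∀ e : Equiv.Perm α, (∀ i ∈ S, e i = i) → ∀ x, x ∈ Sᶜ ↔ e x ∈ Sᶜ := by
    intro e he x
    constructor
    · intro hx
      simp only [Finset.mem_compl] at hx ⊢
      intro hex
      have hx' : e x = x := e.injective (he _ hex)
      exact hx (hx' ▸ hex)
    · intro hx
      simp only [Finset.mem_compl] at hx ⊢
      intro hxs
      exact hx (by rw [he x hxs]; exact hxs)
  have hof : ∀ (e : Equiv.Perm α) (he : ∀ i ∈ S, e i = i),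
      Equiv.Perm.ofSubtype (e.subtypePerm (fun x => (key e he x).symm)) = e := by
    intro e he
    apply Equiv.Perm.ofSubtype_subtypePerm
    intro x hx
    by_contra hxc
    simp only [Finset.mem_compl, not_not] at hxc
    exact hx (he x hxc)
  rw [← Finset.sum_filter]
  refine Finset.sum_nbij' (i := fun e => if he : ∀ i ∈ S, e i = i then
      Equiv.Perm.subtypePerm e (fun x => (key e he x).symm) else 1)
    (j := fun τ => Equiv.Perm.ofSubtype τ) ?_ ?_ ?_ ?_ ?_
  · intro e he
    exact Finset.mem_univ _
  · intro τ _
    simp only [Finset.mem_filter, Finset.mem_univ, true_and]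
    intro i hi
    exact Equiv.Perm.ofSubtype_apply_of_not_mem τ (by simp [hi])
  · intro e he
    simp only [Finset.mem_filter, Finset.mem_univ, true_and] at he
    simp only [dif_pos he]
    exact hof e he
  · intro τ _
    have hfix : ∀ i ∈ S, Equiv.Perm.ofSubtype τ i = i := fun i hi =>
      Equiv.Perm.ofSubtype_apply_of_not_mem τ (by simp [hi])
    simp only [dif_pos hfix]
    exact Equiv.Perm.subtypePerm_ofSubtype τ
  · intro e he
    simp only [Finset.mem_filter, Finset.mem_univ, true_and] at he
    simp only [dif_pos he, hof e he]

lemma prod_fix_factor {n : ℕ} (S : Finset (Fin n)) (e : Equiv.Perm (Fin n)) :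
    (∏ i ∈ S, (-((Polynomial.X : Polynomial ℝ) * (1 : Matrix (Fin n) (Fin n) (Polynomial ℝ)) i (e i))))
      = if ∀ i ∈ S, e i = i then (-(Polynomial.X : Polynomial ℝ)) ^ S.card else 0 := by
  by_cases h : ∀ i ∈ S, e i = i
  · rw [if_pos h]
    rw [← Finset.prod_const]
    apply Finset.prod_congr rfl
    intro i hi
    rw [h i hi, Matrix.one_apply_eq]
    ring
  · rw [if_neg h]
    push_neg at h
    obtain ⟨i, hi, hei⟩ := h
    apply Finset.prod_eq_zero hi
    rw [Matrix.one_apply_ne (fun hc => hei hc.symm)]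
    ring

lemma permPoly_eq_sum {n : ℕ} (A : Matrix (Fin n) (Fin n) ℝ) :
    permPoly A = ∑ S : Finset (Fin n), (-X : Polynomial ℝ)^S.card * C (pper A Sᶜ) := by
  classical
  rw [permPoly, Matrix.per]
  have h1 : ∀ e : Equiv.Perm (Fin n), ∏ i, (A.map C - (X : Polynomial ℝ) • 1) i (e i)
      = ∑ t ∈ (univ : Finset (Fin n)).powerset,
        (if ∀ i ∈ t, e i = i then (-X : Polynomial ℝ)^t.card else 0) * ∏ i ∈ univ \ t, C (A i (e i)) := by
    intro e
    have hent : ∀ i, (A.map C - (X : Polynomial ℝ) • 1) i (e i)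
        = -((X : Polynomial ℝ) * (1 : Matrix (Fin n) (Fin n) (Polynomial ℝ)) i (e i)) + C (A i (e i)) := by
      intro i
      simp [Matrix.sub_apply, Matrix.map_apply, Matrix.smul_apply, smul_eq_mul, sub_eq_neg_add]
    rw [Finset.prod_congr rfl (fun i _ => hent i), Finset.prod_add]
    apply Finset.sum_congr rfl
    intro t _
    rw [prod_fix_factor]
  rw [Finset.sum_congr rfl (fun e _ => h1 e), Finset.sum_comm]
  rw [Finset.powerset_univ]
  apply Finset.sum_congr rfl
  intro t _
  have h2 : ∀ e : Equiv.Perm (Fin n),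
      (if ∀ i ∈ t, e i = i then (-X : Polynomial ℝ)^t.card else 0) * ∏ i ∈ univ \ t, C (A i (e i))
      = (if ∀ i ∈ t, e i = i then (-X : Polynomial ℝ)^t.card * ∏ i ∈ tᶜ, C (A i (e i)) else 0) := by
    intro e
    rw [Finset.compl_eq_univ_sdiff]
    split <;> simp
  rw [Finset.sum_congr rfl (fun e _ => h2 e)]
  have h3 := sum_fixing t (fun e => (-X : Polynomial ℝ)^t.card * ∏ i ∈ tᶜ, C (A i (e i)))
  refine Eq.trans ?_ (h3.trans ?_)
  · exact Finset.sum_congr rfl fun e _ => by congr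
  rw [← Finset.mul_sum]
  congr 1
  rw [pper, Matrix.per, map_sum]
  apply Finset.sum_congr rfl
  intro τ _
  rw [map_prod]
  rw [Finset.prod_subtype tᶜ (fun x => Iff.rfl) (fun i => C (A i (Equiv.Perm.ofSubtype τ i)))]
  apply Finset.prod_congr rfl
  intro i _
  congr 2
  · exact Equiv.Perm.ofSubtype_apply_coe τ i

noncomputable def qsum {n : ℕ} (A : Matrix (Fin n) (Fin n) ℝ) (j : ℕ) : ℝ :=
  ∑ T ∈ Finset.univ.filter (fun T : Finset (Fin n) => T.card = j), pper A T

lemma coeff_permPoly {n : ℕ} (A : Matrix (Fin n) (Fin n) ℝ) (k : ℕ) (hk : k ≤ n) :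
    (permPoly A).coeff k = (-1:ℝ)^k * qsum A (n - k) := by
  classical
  rw [permPoly_eq_sum, Polynomial.finset_sum_coeff]
  have hterm : ∀ S : Finset (Fin n),
      ((-X : Polynomial ℝ)^S.card * C (pper A Sᶜ)).coeff k
      = if S.card = k then (-1:ℝ)^k * pper A Sᶜ else 0 := by
    intro S
    have : (-X : Polynomial ℝ)^S.card * C (pper A Sᶜ)
        = Polynomial.monomial S.card ((-1:ℝ)^S.card * pper A Sᶜ) := by
      rw [neg_pow, ← Polynomial.C_mul_X_pow_eq_monomial, Polynomial.C_mul, Polynomial.C_pow, Polynomial.C_neg, Polynomial.C_1]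
      ring
    rw [this, Polynomial.coeff_monomial]
    split_ifs with h
    · rw [h]
    · rfl
  rw [Finset.sum_congr rfl (fun S _ => hterm S), ← Finset.sum_filter, qsum, Finset.mul_sum]
  refine Finset.sum_nbij' (i := fun S => Sᶜ) (j := fun T => Tᶜ) ?_ ?_ ?_ ?_ ?_
  · intro S hS
    simp only [Finset.mem_filter, Finset.mem_univ, true_and] at hS ⊢
    rw [Finset.card_compl, Fintype.card_fin, hS]
  · intro T hT
    simp only [Finset.mem_filter, Finset.mem_univ, true_and] at hT ⊢
    rw [Finset.card_compl, Fintype.card_fin, hT, Nat.sub_sub_self hk]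
  · intro S _
    exact compl_compl S
  · intro T _
    exact compl_compl T
  · intro S _
    rfl

lemma bijOn_sdiff {α β : Type*} {f : α → β} {s : Set α} {t : Set β} (h : Set.BijOn f s t)
    (u : Set α) (hu : u ⊆ s) : Set.BijOn f (s \ u) (t \ f '' u) := by
  refine ⟨?_, h.injOn.mono Set.diff_subset, ?_⟩
  · intro x hx
    refine ⟨h.mapsTo hx.1, ?_⟩
    rintro ⟨x', hx', hfx⟩
    exact hx.2 (h.injOn (hu hx') hx.1 hfx ▸ hx')
  · intro y hy
    obtain ⟨x, hx, rfl⟩ := h.surjOn hy.1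
    exact ⟨x, ⟨hx, fun hxu => hy.2 ⟨x, hxu, rfl⟩⟩, rfl⟩

lemma assemble {n : ℕ} (A : Matrix (Fin n) (Fin n) ℝ) {i0 i1 : Fin n} (hne : i0 ≠ i1)
    (hp01 : 0 < A i0 i1) (hp10 : 0 < A i1 i0)
    (S' : Finset (Fin n)) (τ' : Equiv.Perm (Fin n)) (h0 : i0 ∉ S') (h1 : i1 ∉ S')
    (hmem' : ∀ s ∈ S', τ' s ∈ S' ∧ 0 < A s (τ' s)) (hfix' : ∀ s ∉ S', τ' s = s) :
    ∃ τ : Equiv.Perm (Fin n),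
      (∀ s ∈ insert i0 (insert i1 S'), τ s ∈ insert i0 (insert i1 S') ∧ 0 < A s (τ s)) ∧
      (∀ s ∉ insert i0 (insert i1 S'), τ s = s) := by
  classical
  refine ⟨τ' * Equiv.swap i0 i1, ?_, ?_⟩
  · intro s hs
    rcases Finset.mem_insert.1 hs with heq | hs'
    · rw [heq]
      have : (τ' * Equiv.swap i0 i1) i0 = i1 := by
        simp only [Equiv.Perm.mul_apply, Equiv.swap_apply_left]
        exact hfix' i1 h1
      rw [this]
      exact ⟨Finset.mem_insert_of_mem (Finset.mem_insert_self _ _), hp01⟩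
    rcases Finset.mem_insert.1 hs' with heq | hs''
    · rw [heq]
      have : (τ' * Equiv.swap i0 i1) i1 = i0 := by
        simp only [Equiv.Perm.mul_apply, Equiv.swap_apply_right]
        exact hfix' i0 h0
      rw [this]
      exact ⟨Finset.mem_insert_self _ _, hp10⟩
    · have hs0 : s ≠ i0 := fun h => h0 (h ▸ hs'')
      have hs1 : s ≠ i1 := fun h => h1 (h ▸ hs'')
      have : (τ' * Equiv.swap i0 i1) s = τ' s := by
        simp only [Equiv.Perm.mul_apply, Equiv.swap_apply_of_ne_of_ne hs0 hs1]
      rw [this]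
      exact ⟨Finset.mem_insert_of_mem (Finset.mem_insert_of_mem (hmem' s hs'').1),
        (hmem' s hs'').2⟩
  · intro s hs
    have hs0 : s ≠ i0 := fun h => hs (h ▸ Finset.mem_insert_self _ _)
    have hs1 : s ≠ i1 := fun h => hs (h ▸ Finset.mem_insert_of_mem (Finset.mem_insert_self _ _))
    have hsS : s ∉ S' := fun h => hs (Finset.mem_insert_of_mem (Finset.mem_insert_of_mem h))
    simp only [Equiv.Perm.mul_apply, Equiv.swap_apply_of_ne_of_ne hs0 hs1]
    exact hfix' s hsS

lemma key_lemma {n : ℕ} (A : Matrix (Fin n) (Fin n) ℝ) (hsym : A.IsSymm) :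
    ∀ k (I J : Finset (Fin n)) (σ : Fin n → Fin n), I.card = k →
      Set.BijOn σ ↑I ↑J → (∀ i ∈ I, 0 < A i (σ i)) →
      ∃ (S : Finset (Fin n)) (τ : Equiv.Perm (Fin n)),
        ↑S ⊆ (↑I ∪ ↑J : Set (Fin n)) ∧ k ≤ S.card ∧
        (∀ s ∈ S, τ s ∈ S ∧ 0 < A s (τ s)) ∧ ∀ s ∉ S, τ s = s := by
  intro k
  induction k using Nat.strong_induction_on with
  | _ k IH =>
  intro I J σ hIcard hbij hpos
  classical
  by_cases hIJ : I = J
  · subst hIJ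
    letI : DecidablePred (· ∈ (↑I : Set (Fin n))) :=
      fun x => decidable_of_iff (x ∈ I) Iff.rfl
    refine ⟨I, Equiv.Perm.ofSubtype (Set.BijOn.equiv σ hbij), ?_, ?_, ?_, ?_⟩
    · intro x hx; exact Set.mem_union_left _ hx
    · exact le_of_eq hIcard.symm
    · intro s hs
      have hmem : s ∈ (↑I : Set (Fin n)) := hs
      rw [Equiv.Perm.ofSubtype_apply_of_mem _ hmem]
      have hval : ((Set.BijOn.equiv σ hbij ⟨s, hmem⟩ : (↑I : Set (Fin n))) : Fin n) = σ s := rfl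
      rw [hval]
      exact ⟨hbij.mapsTo hmem, hpos s hs⟩
    · intro s hs
      exact Equiv.Perm.ofSubtype_apply_of_not_mem _ (by exact hs)
  · -- I ≠ J
    have himage : I.image σ = J :=
      Finset.coe_injective (by rw [Finset.coe_image, hbij.image_eq])
    have hJcard : J.card = k := by
      rw [← himage, Finset.card_image_of_injOn hbij.injOn, hIcard]
    have hex : ∃ i0, i0 ∈ I ∧ i0 ∉ J := by
      by_contra h
      push_neg at h
      exact hIJ (Finset.eq_of_subset_of_card_le (fun x hx => h x hx)
        (by rw [hIcard, hJcard]))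
    obtain ⟨i0, hi0I, hi0J⟩ := hex
    have hi1J : σ i0 ∈ J := hbij.mapsTo hi0I
    have hne : i0 ≠ σ i0 := fun h => hi0J (h ▸ hi1J)
    have hp01 : 0 < A i0 (σ i0) := hpos i0 hi0I
    have hp10 : 0 < A (σ i0) i0 := by rw [hsym.apply]; exact hp01
    -- the finset of removed domain points
    by_cases hi1I : σ i0 ∈ I
    · -- remove two points
      set D : Finset (Fin n) := {i0, σ i0} with hD
      have hDsub : D ⊆ I := by
        intro x hx
        rcases Finset.mem_insert.1 hx with rfl | hx
        · exact hi0I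
        · rw [Finset.mem_singleton.1 hx]; exact hi1I
      have hDcard : D.card = 2 := by
        rw [hD, Finset.card_insert_of_notMem (by simpa using hne), Finset.card_singleton]
      have hk2 : 2 ≤ k := hIcard ▸ hDcard ▸ Finset.card_le_card hDsub
      have hbij' : Set.BijOn σ ↑(I \ D) ↑(J \ D.image σ) := by
        have := bijOn_sdiff hbij ↑D (by exact_mod_cast hDsub)
        rwa [Finset.coe_sdiff, Finset.coe_sdiff, Finset.coe_image] at *
      have hI'card : (I \ D).card = k - 2 := by
        rw [Finset.card_sdiff_of_subset hDsub, hIcard, hDcard]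
      obtain ⟨S', τ', hsub', hcard', hmem', hfix'⟩ :=
        IH (k - 2) (by omega) (I \ D) (J \ D.image σ) σ hI'card hbij'
          (fun i hi => hpos i (Finset.mem_sdiff.1 hi).1)
      have h0 : i0 ∉ S' := by
        intro h
        rcases hsub' h with h | h
        · exact (Finset.mem_sdiff.1 (by exact_mod_cast h)).2 (Finset.mem_insert_self _ _)
        · exact hi0J (Finset.mem_sdiff.1 (by exact_mod_cast h)).1
      have h1 : σ i0 ∉ S' := by
        intro h
        rcases hsub' h with h | h
        · exact (Finset.mem_sdiff.1 (by exact_mod_cast h)).2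
            (Finset.mem_insert_of_mem (Finset.mem_singleton_self _))
        · refine (Finset.mem_sdiff.1 (by exact_mod_cast h)).2 ?_
          exact Finset.mem_image_of_mem σ (Finset.mem_insert_self _ _)
      obtain ⟨τ, hmem, hfix⟩ := assemble A hne hp01 hp10 S' τ' h0 h1 hmem' hfix'
      refine ⟨insert i0 (insert (σ i0) S'), τ, ?_, ?_, hmem, hfix⟩
      · rw [Finset.coe_insert, Finset.coe_insert]
        refine Set.insert_subset (Set.mem_union_left _ hi0I)
          (Set.insert_subset (Set.mem_union_right _ hi1J) ?_)
        refine hsub'.trans (Set.union_subset_union ?_ ?_)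
        · exact_mod_cast Finset.sdiff_subset
        · exact_mod_cast Finset.sdiff_subset
      · rw [Finset.card_insert_of_notMem (by
            simp only [Finset.mem_insert]
            push_neg
            exact ⟨hne, h0⟩),
          Finset.card_insert_of_notMem h1]
        omega
    · -- σ i0 ∉ I : remove one point
      set D : Finset (Fin n) := {i0} with hD
      have hDsub : D ⊆ I := by simpa [hD] using hi0I
      have hDcard : D.card = 1 := Finset.card_singleton _
      have hk1 : 1 ≤ k := hIcard ▸ hDcard ▸ Finset.card_le_card hDsub
      have hbij' : Set.BijOn σ ↑(I \ D) ↑(J \ D.image σ) := by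
        have := bijOn_sdiff hbij ↑D (by exact_mod_cast hDsub)
        rwa [Finset.coe_sdiff, Finset.coe_sdiff, Finset.coe_image] at *
      have hI'card : (I \ D).card = k - 1 := by
        rw [Finset.card_sdiff_of_subset hDsub, hIcard, hDcard]
      obtain ⟨S', τ', hsub', hcard', hmem', hfix'⟩ :=
        IH (k - 1) (by omega) (I \ D) (J \ D.image σ) σ hI'card hbij'
          (fun i hi => hpos i (Finset.mem_sdiff.1 hi).1)
      have h0 : i0 ∉ S' := by
        intro h
        rcases hsub' h with h | h
        · exact (Finset.mem_sdiff.1 (by exact_mod_cast h)).2 (Finset.mem_singleton_self _)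
        · exact hi0J (Finset.mem_sdiff.1 (by exact_mod_cast h)).1
      have h1 : σ i0 ∉ S' := by
        intro h
        rcases hsub' h with h | h
        · exact hi1I (Finset.mem_sdiff.1 (by exact_mod_cast h)).1
        · refine (Finset.mem_sdiff.1 (by exact_mod_cast h)).2 ?_
          exact Finset.mem_image_of_mem σ (Finset.mem_singleton_self _)
      obtain ⟨τ, hmem, hfix⟩ := assemble A hne hp01 hp10 S' τ' h0 h1 hmem' hfix'
      refine ⟨insert i0 (insert (σ i0) S'), τ, ?_, ?_, hmem, hfix⟩
      · rw [Finset.coe_insert, Finset.coe_insert]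
        refine Set.insert_subset (Set.mem_union_left _ hi0I)
          (Set.insert_subset (Set.mem_union_right _ hi1J) ?_)
        refine hsub'.trans (Set.union_subset_union ?_ ?_)
        · exact_mod_cast Finset.sdiff_subset
        · exact_mod_cast Finset.sdiff_subset
      · rw [Finset.card_insert_of_notMem (by
            simp only [Finset.mem_insert]
            push_neg
            exact ⟨hne, h0⟩),
          Finset.card_insert_of_notMem h1]
        omega

lemma pper_nonneg {n : ℕ} (A : Matrix (Fin n) (Fin n) ℝ) (h : ∀ i j, 0 ≤ A i j)
    (S : Finset (Fin n)) : 0 ≤ pper A S :=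
  per_nonneg _ (fun _ _ => h _ _)

lemma pper_empty {n : ℕ} (A : Matrix (Fin n) (Fin n) ℝ) : pper A (∅ : Finset (Fin n)) = 1 := by
  haveI : IsEmpty {x : Fin n // x ∈ (∅ : Finset (Fin n))} :=
    ⟨fun x => absurd x.2 (Finset.notMem_empty _)⟩
  exact per_empty _

lemma pper_ne_zero_of_perm {n : ℕ} (A : Matrix (Fin n) (Fin n) ℝ) (hnonneg : ∀ i j, 0 ≤ A i j)
    (S : Finset (Fin n)) (τ : Equiv.Perm (Fin n))
    (hmem : ∀ s ∈ S, τ s ∈ S ∧ 0 < A s (τ s)) (hfix : ∀ s ∉ S, τ s = s) : pper A S ≠ 0 := by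
  classical
  have hiff : ∀ x, x ∈ S ↔ τ x ∈ S := by
    intro x
    constructor
    · exact fun h => (hmem x h).1
    · intro h
      by_contra hx
      rw [hfix x hx] at h
      exact hx h
  refine per_ne_zero_of_pos _ (fun _ _ => hnonneg _ _) (τ.subtypePerm (fun x => (hiff x).symm)) ?_
  intro i
  exact (hmem i i.2).2

lemma pper_orderEmb {n m : ℕ} (A : Matrix (Fin n) (Fin n) ℝ) (T : Finset (Fin n))
    (hT : T.card = m) :
    (A.submatrix (T.orderEmbOfFin hT) (T.orderEmbOfFin hT)).per = pper A T := by
  rw [pper, ← per_submatrix (A.submatrix (fun i : {x : Fin n // x ∈ T} => (i : Fin n))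
      (fun i : {x : Fin n // x ∈ T} => (i : Fin n)))
    (T.orderIsoOfFin hT).toEquiv (T.orderIsoOfFin hT).toEquiv]
  congr 1


lemma rank_elem_le {n : ℕ} (A : Matrix (Fin n) (Fin n) ℝ) (hnonneg : ∀ i j, 0 ≤ A i j)
    (hsym : A.IsSymm) {k : ℕ} (f g : Fin k → Fin n) (hf : Function.Injective f)
    (hg : Function.Injective g) (hper : (A.submatrix f g).per ≠ 0) :
    ∃ S : Finset (Fin n), k ≤ S.card ∧ pper A S ≠ 0 := by
  classical
  obtain ⟨e, he⟩ := exists_pos_of_per_ne_zero _ (fun i j => hnonneg _ _) hper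
  set I := Finset.image f Finset.univ with hI
  set J := Finset.image g Finset.univ with hJ
  set σ : Fin n → Fin n := fun x => if h : ∃ i, f i = x then g (e (h.choose)) else x with hσdef
  have hσ : ∀ i, σ (f i) = g (e i) := by
    intro i
    have hex : ∃ j, f j = f i := ⟨i, rfl⟩
    simp only [hσdef, dif_pos hex]
    rw [hf hex.choose_spec]
  have hmapsto : ∀ x ∈ I, σ x ∈ J := by
    intro x hx
    obtain ⟨i, _, rfl⟩ := Finset.mem_image.1 hx
    rw [hσ]
    exact Finset.mem_image_of_mem g (Finset.mem_univ _)
  have hbij : Set.BijOn σ ↑I ↑J := by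
    refine ⟨fun x hx => hmapsto x hx, ?_, ?_⟩
    · intro x hx y hy hxy
      obtain ⟨i, _, rfl⟩ := Finset.mem_image.1 (Finset.mem_coe.1 hx)
      obtain ⟨j, _, rfl⟩ := Finset.mem_image.1 (Finset.mem_coe.1 hy)
      rw [hσ, hσ] at hxy
      rw [e.injective (hg hxy)]
    · intro y hy
      obtain ⟨j, _, rfl⟩ := Finset.mem_image.1 (Finset.mem_coe.1 hy)
      refine ⟨f (e.symm j), ?_, ?_⟩
      · exact Finset.mem_coe.2 (Finset.mem_image_of_mem f (Finset.mem_univ _))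
      · rw [hσ, Equiv.apply_symm_apply]
  have hIcard : I.card = k := by
    rw [hI, Finset.card_image_of_injective _ hf, Finset.card_univ, Fintype.card_fin]
  have hpos : ∀ i ∈ I, 0 < A i (σ i) := by
    intro x hx
    obtain ⟨i, _, rfl⟩ := Finset.mem_image.1 hx
    rw [hσ]
    exact he i
  obtain ⟨S, τ, _, hcard, hmem, hfixS⟩ := key_lemma A hsym k I J σ hIcard hbij hpos
  exact ⟨S, hcard, pper_ne_zero_of_perm A hnonneg S τ hmem hfixS⟩

/-- For a nonnegative symmetric real `n × n` matrix `A`,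
`ρ_per(A) + η_per(A) = n`. -/
theorem perm_rank_add_nullity_of_nonneg_symm {n : ℕ} (A : Matrix (Fin n) (Fin n) ℝ)
    (hnonneg : ∀ i j, 0 ≤ A i j) (hsym : A.IsSymm) :
    permRank A + permNullity A = n := by
  classical
  set Q : Set ℕ := {j | ∃ T : Finset (Fin n), T.card = j ∧ pper A T ≠ 0} with hQdef
  have hQ0 : 0 ∈ Q := ⟨∅, Finset.card_empty, by rw [pper_empty]; exact one_ne_zero⟩
  have hQbdd : ∀ j ∈ Q, j ≤ n := by
    rintro j ⟨T, rfl, -⟩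
    calc T.card ≤ Finset.univ.card := Finset.card_le_univ T
    _ = n := by rw [Finset.card_univ, Fintype.card_fin]
  set m := sSup Q with hmdef
  have hQbdd' : BddAbove Q := ⟨n, fun j hj => hQbdd j hj⟩
  have hmQ : m ∈ Q := Nat.sSup_mem ⟨0, hQ0⟩ hQbdd'
  have hmn : m ≤ n := hQbdd m hmQ
  have hle : ∀ j ∈ Q, j ≤ m := fun j hj => le_csSup hQbdd' hj
  have hq : ∀ j, qsum A j ≠ 0 ↔ j ∈ Q := by
    intro j
    constructor
    · intro h
      obtain ⟨T, hT, hTne⟩ := Finset.exists_ne_zero_of_sum_ne_zero h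
      exact ⟨T, (Finset.mem_filter.1 hT).2, hTne⟩
    · rintro ⟨T, rfl, hTne⟩
      have hpos : 0 < qsum A T.card := by
        apply Finset.sum_pos'
        · intro S _
          exact pper_nonneg A hnonneg S
        · exact ⟨T, Finset.mem_filter.2 ⟨Finset.mem_univ _, rfl⟩,
            lt_of_le_of_ne (pper_nonneg A hnonneg T) (Ne.symm hTne)⟩
      exact ne_of_gt hpos
  have hp0 : permPoly A ≠ 0 := by
    intro h
    have hc := coeff_permPoly A n le_rfl
    rw [h, Polynomial.coeff_zero, Nat.sub_self] at hc
    have h2 := (hq 0).2 hQ0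
    rcases mul_eq_zero.1 hc.symm with h3 | h3
    · exact absurd h3 (pow_ne_zero _ (by norm_num))
    · exact h2 h3
  have hrank : permRank A = m := by
    rw [permRank]
    apply le_antisymm
    · apply csSup_le
      · refine ⟨0, Fin.elim0, Fin.elim0, fun x => x.elim0, fun x => x.elim0, ?_⟩
        rw [per_empty]
        exact one_ne_zero
      · rintro k ⟨f, g, hf, hg, hper⟩
        obtain ⟨S, hcard, hSne⟩ := rank_elem_le A hnonneg hsym f g hf hg hper
        exact hcard.trans (hle S.card ⟨S, rfl, hSne⟩)
    · obtain ⟨T, hT, hTne⟩ := hmQ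
      apply le_csSup
      · refine ⟨n, ?_⟩
        rintro k ⟨f, g, hf, hg, hper⟩
        have := Fintype.card_le_of_injective f hf
        simpa using this
      · exact ⟨⇑(T.orderEmbOfFin hT), ⇑(T.orderEmbOfFin hT), (T.orderEmbOfFin hT).injective,
          (T.orderEmbOfFin hT).injective, by rw [pper_orderEmb A T hT]; exact hTne⟩
  have hnull : permNullity A = n - m := by
    rw [permNullity, Polynomial.rootMultiplicity_eq_natTrailingDegree']
    apply le_antisymm
    · apply Polynomial.natTrailingDegree_le_of_ne_zero
      rw [coeff_permPoly A (n - m) (by omega), Nat.sub_sub_self hmn]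
      exact mul_ne_zero (pow_ne_zero _ (by norm_num)) ((hq m).2 hmQ)
    · apply Polynomial.le_natTrailingDegree hp0
      intro d hd
      rw [coeff_permPoly A d (by omega)]
      have hz : qsum A (n - d) = 0 := by
        by_contra hqd
        have := hle (n - d) ((hq (n - d)).1 hqd)
        omega
      rw [hz, mul_zero]
  rw [hrank, hnull]
  omega
end

section
/- Let A be a positive semi-definite real symmetric n×n matrix with ρ_per(A) = k. Then there exists an index set S ⊆ [n] with |S| = k such that the principal submatrix A[S,S] has nonzero permanent. -/
/-- The principal submatrix `A[S, S]` of `A`, with rows and columns indexed by `S`. -/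
noncomputable def principalSub {n : ℕ} {R : Type*} (A : Matrix (Fin n) (Fin n) R)
    (S : Finset (Fin n)) : Matrix S S R :=
  A.submatrix Subtype.val Subtype.val

/-- Key identity: for `u v : Fin k → (Fin n → ℝ)`, summing the products of the symmetrized
tensors `φ ↦ ∑ σ, ∏ a, u (σ a) (φ a)` gives `k!` times the permanent of the Gram-type matrix
`(a, b) ↦ ⟨u a, v b⟩`. -/
lemma key_sum {k n : ℕ} (u v : Fin k → (Fin n → ℝ)) :
    ∑ φ : Fin k → Fin n,
        (∑ σ : Equiv.Perm (Fin k), ∏ a, u (σ a) (φ a)) *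
        (∑ τ : Equiv.Perm (Fin k), ∏ a, v (τ a) (φ a)) =
      (Nat.factorial k : ℝ) *
        (Matrix.of fun a b : Fin k => ∑ m, u a m * v b m).per := by
  set G : Matrix (Fin k) (Fin k) ℝ := Matrix.of fun a b : Fin k => ∑ m, u a m * v b m with hG
  have h1 : ∀ φ : Fin k → Fin n,
      (∑ σ : Equiv.Perm (Fin k), ∏ a, u (σ a) (φ a)) *
      (∑ τ : Equiv.Perm (Fin k), ∏ a, v (τ a) (φ a)) =
      ∑ σ : Equiv.Perm (Fin k), ∑ τ : Equiv.Perm (Fin k),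
        ∏ a, (u (σ a) (φ a) * v (τ a) (φ a)) := by
    intro φ
    rw [Finset.sum_mul_sum]
    exact Finset.sum_congr rfl fun σ _ => Finset.sum_congr rfl fun τ _ =>
      (Finset.prod_mul_distrib).symm
  simp_rw [h1]
  rw [Finset.sum_comm]
  have h2 : ∀ σ : Equiv.Perm (Fin k),
      ∑ φ : Fin k → Fin n, ∑ τ : Equiv.Perm (Fin k), ∏ a, (u (σ a) (φ a) * v (τ a) (φ a))
      = G.per := by
    intro σ
    rw [Finset.sum_comm]
    have h3 : ∀ τ : Equiv.Perm (Fin k),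
        ∑ φ : Fin k → Fin n, ∏ a, (u (σ a) (φ a) * v (τ a) (φ a))
        = ∏ a, G (σ a) (τ a) := by
      intro τ
      rw [← Fintype.prod_sum (fun a m => u (σ a) m * v (τ a) m)]
      rfl
    simp_rw [h3]
    have h4 : ∀ τ : Equiv.Perm (Fin k),
        ∏ a, G (σ a) (τ a) = ∏ b, G b ((τ * σ⁻¹) b) := by
      intro τ
      refine Fintype.prod_equiv σ _ _ fun a => ?_
      simp [Equiv.Perm.mul_apply]
    simp_rw [h4]
    rw [show G.per = ∑ e : Equiv.Perm (Fin k), ∏ b, G b (e b) from rfl]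
    exact Equiv.sum_comp (Equiv.mulRight σ⁻¹) fun e => ∏ b, G b (e b)
  simp_rw [h2]
  rw [Finset.sum_const, nsmul_eq_mul]
  congr 1
  simp [Fintype.card_perm]

/-- The permanent is invariant under reindexing rows and columns by equivalences. -/
lemma per_submatrix_equiv {ι κ ι' κ' R : Type*} [Fintype ι] [Fintype κ] [Fintype ι'] [Fintype κ']
    [DecidableEq ι] [DecidableEq κ] [DecidableEq ι'] [DecidableEq κ'] [CommSemiring R]
    (M : Matrix ι κ R) (e₁ : ι' ≃ ι) (e₂ : κ' ≃ κ) :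
    (M.submatrix e₁ e₂).per = M.per := by
  unfold Matrix.per
  refine Fintype.sum_equiv (e₁.equivCongr e₂) _ _ fun e => ?_
  refine Fintype.prod_equiv e₁ _ _ fun i => ?_
  simp [Matrix.submatrix, Equiv.equivCongr]

/-- Let `A` be a positive semi-definite real symmetric `n × n` matrix with
`ρ_per(A) = k`.  Then there is an index set `S ⊆ [n]` with `|S| = k` such that the
principal submatrix `A[S, S]` has nonzero permanent. -/
theorem exists_principal_submatrix_per_ne_zero {n : ℕ} (A : Matrix (Fin n) (Fin n) ℝ)
    (hsym : A.IsSymm) (hpsd : A.PosSemidef) (k : ℕ) (hk : permRank A = k) :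
    ∃ S : Finset (Fin n), S.card = k ∧ (principalSub A S).per ≠ 0 := by
  -- the sup defining `permRank` is attained
  have hmem : k ∈ {k | ∃ f g : Fin k → Fin n, Function.Injective f ∧ Function.Injective g ∧
      (A.submatrix f g).per ≠ 0} := by
    rw [← hk]
    refine Nat.sSup_mem ⟨0, Fin.elim0, Fin.elim0, fun a => a.elim0, fun a => a.elim0, ?_⟩
      ⟨n, fun m ⟨f, g, hf, _, _⟩ => by
        simpa using Fintype.card_le_of_injective f hf⟩
    simp [Matrix.per]
  obtain ⟨f, g, hf, hg, hper⟩ := hmem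
  -- write `A = Bᴴ B`
  obtain ⟨B, hA⟩ : ∃ B : Matrix (Fin n) (Fin n) ℝ, A = B.conjTranspose * B := by
    open MatrixOrder Matrix.Norms.L2Operator in
    exact CStarAlgebra.nonneg_iff_eq_star_mul_self.mp hpsd.nonneg
  have hentry : ∀ i j, A i j = ∑ m, B m i * B m j := by
    intro i j
    rw [hA]
    simp [Matrix.mul_apply, Matrix.conjTranspose_apply]
  set u : Fin k → (Fin n → ℝ) := fun a m => B m (f a) with hu
  set v : Fin k → (Fin n → ℝ) := fun a m => B m (g a) with hv
  have hGfg : (Matrix.of fun a b : Fin k => ∑ m, u a m * v b m) = A.submatrix f g := by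
    ext a b; simp [hentry, Matrix.submatrix, hu, hv]
  have hGff : (Matrix.of fun a b : Fin k => ∑ m, u a m * u b m) = A.submatrix f f := by
    ext a b; simp [hentry, Matrix.submatrix, hu, hv]
  have hGgg : (Matrix.of fun a b : Fin k => ∑ m, v a m * v b m) = A.submatrix g g := by
    ext a b; simp [hentry, Matrix.submatrix, hu, hv]
  -- Cauchy–Schwarz argument
  have hcs := Finset.sum_mul_sq_le_sq_mul_sq Finset.univ
    (fun φ : Fin k → Fin n => ∑ σ : Equiv.Perm (Fin k), ∏ a, u (σ a) (φ a))
    (fun φ : Fin k → Fin n => ∑ τ : Equiv.Perm (Fin k), ∏ a, v (τ a) (φ a))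
  simp only [pow_two] at hcs
  rw [key_sum u v, key_sum u u, key_sum v v, hGfg, hGff, hGgg] at hcs
  have hfact : (0:ℝ) < (Nat.factorial k : ℝ) := by positivity
  have hff : (A.submatrix f f).per ≠ 0 := by
    intro h0
    rw [h0] at hcs
    have : (0:ℝ) < ((Nat.factorial k : ℝ) * (A.submatrix f g).per) *
        ((Nat.factorial k : ℝ) * (A.submatrix f g).per) := by
      have : (Nat.factorial k : ℝ) * (A.submatrix f g).per ≠ 0 :=
        mul_ne_zero hfact.ne' hper
      rcases this.lt_or_gt with h | h
      · exact mul_pos_of_neg_of_neg h h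
      · exact mul_pos h h
    simp only [mul_zero, zero_mul] at hcs
    linarith
  -- take `S` to be the image of `f`
  refine ⟨Finset.image f Finset.univ, by
    rw [Finset.card_image_of_injective _ hf, Finset.card_univ, Fintype.card_fin], ?_⟩
  set S := Finset.image f Finset.univ with hS
  have hbij : Function.Bijective (fun i : Fin k => (⟨f i, by simp [hS]⟩ : S)) := by
    constructor
    · intro a b hab
      exact hf (congrArg Subtype.val hab)
    · rintro ⟨x, hx⟩
      simp only [hS, Finset.mem_image, Finset.mem_univ, true_and] at hx
      obtain ⟨i, hi⟩ := hx
      exact ⟨i, Subtype.ext hi⟩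
  set e : Fin k ≃ S := Equiv.ofBijective _ hbij with he
  have : (principalSub A S).submatrix e e = A.submatrix f f := rfl
  rw [← per_submatrix_equiv (principalSub A S) e e, this]
  exact hff
end
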